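/- Let d, n₁, n₂ be natural numbers, let w₁, …, w_d ∈ ℂ^{n₁} be column vectors, and let r₁, …, r_d ∈ ℂ^{1×n₂} be row vectors. Then the maximum cardinality of a subset I ⊆ {1, …, d} such that the family (w_i)_{i ∈ I} is linearly independent and the family (r_i)_{i ∈ I} is linearly independent equals the minimum, over all subsets S ⊆ {1, …, d}, of (the rank of the matrix whose columns are the vectors w_i for i ∈ S) plus (the rank of the matrix whose rows are the vectors r_j for j ∈ {1, …, d} \ S). -/

import Mathlib

open Submodule

section
variable {E : Type} [DecidableEq E] {V : Type} [AddCommGroup V] [Module ℂ V]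

lemma li_subset {f : E → V} {I J : Finset E} (hJ : J ⊆ I)
    (h : LinearIndependent ℂ fun i : I => f i) :
    LinearIndependent ℂ fun i : J => f i := by
  have hinj : Function.Injective (fun x : {x // x ∈ J} => (⟨x.1, hJ x.2⟩ : {x // x ∈ I})) := by
    intro a b hab
    simp only [Subtype.mk.injEq] at hab
    exact Subtype.ext hab
  exact h.comp _ hinj

lemma card_le_set_finrank {f : E → V} {J : Finset E} {s : Set V}
    (h : LinearIndependent ℂ (fun i : J => f i)) (hs : s.Finite)
    (hJ : ∀ i ∈ J, f i ∈ s) : J.card ≤ Set.finrank ℂ s := by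
  haveI := FiniteDimensional.span_of_finite ℂ hs
  have hli : LinearIndependent ℂ (fun i : J => (⟨f i, subset_span (hJ i i.2)⟩ : span ℂ s)) := by
    apply LinearIndependent.of_comp (span ℂ s).subtype
    exact h
  simpa [Set.finrank, Fintype.card_coe] using hli.fintype_card_le_finrank

lemma rank_submodular (f : E → V) (A B : Finset E) :
    Set.finrank ℂ (f '' ↑(A ∪ B)) + Set.finrank ℂ (f '' ↑(A ∩ B)) ≤
      Set.finrank ℂ (f '' ↑A) + Set.finrank ℂ (f '' ↑B) := by
  haveI : FiniteDimensional ℂ (span ℂ (f '' (A : Set E))) :=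
    FiniteDimensional.span_of_finite ℂ (A.finite_toSet.image f)
  haveI : FiniteDimensional ℂ (span ℂ (f '' (B : Set E))) :=
    FiniteDimensional.span_of_finite ℂ (B.finite_toSet.image f)
  have h1 : span ℂ (f '' ↑(A ∪ B)) = span ℂ (f '' ↑A) ⊔ span ℂ (f '' ↑B) := by
    rw [Finset.coe_union, Set.image_union, Submodule.span_union]
  have h2 : span ℂ (f '' ↑(A ∩ B)) ≤ span ℂ (f '' ↑A) ⊓ span ℂ (f '' ↑B) := by
    refine le_inf (span_mono (Set.image_mono ?_)) (span_mono (Set.image_mono ?_)) <;>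
      simp [Finset.inter_subset_left, Finset.inter_subset_right]
  haveI : FiniteDimensional ℂ (span ℂ (f '' (A : Set E)) ⊓ span ℂ (f '' (B : Set E)) : Submodule ℂ V) :=
    Submodule.finiteDimensional_of_le inf_le_left
  have h3 : Set.finrank ℂ (f '' ↑(A ∩ B)) ≤
      Module.finrank ℂ (span ℂ (f '' (A : Set E)) ⊓ span ℂ (f '' (B : Set E)) : Submodule ℂ V) :=
    Submodule.finrank_mono h2
  have h4 := Submodule.finrank_sup_add_finrank_inf_eq (span ℂ (f '' (A : Set E)))
    (span ℂ (f '' (B : Set E)))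
  unfold Set.finrank at *
  rw [h1]
  omega

lemma finrank_insert_quotient {v : V} (hv : v ≠ 0) {s : Set V} (hs : s.Finite) :
    Set.finrank ℂ (insert v s) = Set.finrank ℂ ((span ℂ {v}).mkQ '' s) + 1 := by
  set U := span ℂ {v} with hU
  set p := span ℂ (insert v s) with hp
  haveI : FiniteDimensional ℂ p := FiniteDimensional.span_of_finite ℂ (hs.insert v)
  have hUp : U ≤ p := span_mono (by simp)
  set φ : p →ₗ[ℂ] V ⧸ U := U.mkQ.comp p.subtype with hφ
  have hrn := LinearMap.finrank_range_add_finrank_ker φ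
  have hrange : LinearMap.range φ = span ℂ (U.mkQ '' s) := by
    rw [hφ, LinearMap.range_comp, Submodule.range_subtype, hp, Submodule.map_span,
      Set.image_insert_eq]
    have : U.mkQ v = 0 := by
      rw [Submodule.mkQ_apply, Submodule.Quotient.mk_eq_zero]
      exact mem_span_singleton_self v
    rw [this, span_insert_zero]
  have hker : Module.finrank ℂ (LinearMap.ker φ) = 1 := by
    have : LinearMap.ker φ = Submodule.comap p.subtype U := by
      rw [hφ, LinearMap.ker_comp, Submodule.ker_mkQ]
    rw [this, (Submodule.comapSubtypeEquivOfLe hUp).finrank_eq]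
    exact finrank_span_singleton hv
  rw [hrange, hker] at hrn
  show Module.finrank ℂ (span ℂ (insert v s)) = Module.finrank ℂ (span ℂ ((span ℂ {v}).mkQ '' s)) + 1
  rw [← hU, ← hp]
  omega

lemma li_insert_of_quotient {f : E → V} {I : Finset E} {e : E} (he : e ∉ I)
    (hv : f e ≠ 0)
    (h : LinearIndependent ℂ (fun i : I => (span ℂ {f e}).mkQ (f i))) :
    LinearIndependent ℂ (fun i : (insert e I : Finset E) => f i) := by
  set U := span ℂ {f e} with hU
  have h1 : LinearIndependent ℂ (fun i : I => f i) :=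
    LinearIndependent.of_comp U.mkQ h
  have h2 : f e ∉ span ℂ (f '' (I : Set E)) := by
    intro hmem
    rw [show f '' (I : Set E) = Set.range (fun i : {x // x ∈ I} => f i) from
      Set.image_eq_range f _] at hmem
    obtain ⟨c, hc⟩ := (mem_span_range_iff_exists_fun ℂ).mp hmem
    have hq : ∑ i : I, c i • U.mkQ (f i) = 0 := by
      have := congrArg U.mkQ hc
      rw [map_sum] at this
      simp only [map_smul] at this
      rw [this, Submodule.mkQ_apply, Submodule.Quotient.mk_eq_zero]
      exact mem_span_singleton_self _
    have hc0 := Fintype.linearIndependent_iff.mp h c hq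
    apply hv
    rw [← hc]
    simp [hc0]
  have h3 : LinearIndependent ℂ (fun x : (insert e (I : Set E) : Set E) => f x) :=
    (linearIndepOn_insert (a := e) (s := (I : Set E)) (f := f)
    (by exact_mod_cast he)).mpr ⟨h1, h2⟩
  have heq : ∀ x : E, x ∈ (insert e I : Finset E) ↔ x ∈ insert e (I : Set E) := by
    intro x; simp
  exact h3.comp (Equiv.subtypeEquivRight heq) (Equiv.injective _)

end

lemma exists_indep_ge (E : Type) [DecidableEq E] (G : Finset E) :
    ∀ (V W : Type) (_ : AddCommGroup V) (_ : AddCommGroup W),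
    ∀ (_ : Module ℂ V) (_ : Module ℂ W) (f : E → V) (g : E → W),
    ∃ I S : Finset E, I ⊆ G ∧ S ⊆ G ∧
      LinearIndependent ℂ (fun i : I => f i) ∧
      LinearIndependent ℂ (fun i : I => g i) ∧
      Set.finrank ℂ (f '' ↑S) + Set.finrank ℂ (g '' ↑(G \ S)) ≤ I.card := by
  classical
  induction G using Finset.induction_on with
  | empty =>
    intro V W _ _ _ _ f g
    refine ⟨∅, ∅, Finset.Subset.refl _, Finset.Subset.refl _, ?_, ?_, ?_⟩
    · exact linearIndependent_empty_type
    · exact linearIndependent_empty_type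
    · show Module.finrank ℂ (span ℂ (f '' ↑(∅ : Finset E))) +
        Module.finrank ℂ (span ℂ (g '' ↑((∅ : Finset E) \ ∅))) ≤ _
      rw [Finset.sdiff_empty, Finset.coe_empty, Set.image_empty, Set.image_empty,
        Submodule.span_empty, Submodule.span_empty, finrank_bot, finrank_bot]
      exact Nat.zero_le _
  | @insert e G' he IH =>
    intro V W _ _ _ _ f g
    by_cases hf0 : f e = 0
    · obtain ⟨I, S, hIG, hSG, h1, h2, hr⟩ := IH V W ‹_› ‹_› ‹_› ‹_› f g
      refine ⟨I, insert e S, hIG.trans (Finset.subset_insert _ _),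
        Finset.insert_subset_insert _ hSG, h1, h2, ?_⟩
      have e1 : Set.finrank ℂ (f '' ↑(insert e S)) = Set.finrank ℂ (f '' ↑S) := by
        rw [Finset.coe_insert, Set.image_insert_eq, hf0]
        show Module.finrank ℂ (span ℂ (insert 0 (f '' ↑S))) = _
        rw [span_insert_zero]
        rfl
      have e2 : (insert e G') \ (insert e S) = G' \ S := by
        ext x
        have hne : x ∈ G' → x ≠ e := fun hx hxe => he (hxe ▸ hx)
        simp only [Finset.mem_sdiff, Finset.mem_insert, not_or]
        constructor
        · rintro ⟨h1 | h1, h2, h3⟩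
          · exact absurd h1 h2
          · exact ⟨h1, h3⟩
        · rintro ⟨h1, h2⟩
          exact ⟨Or.inr h1, hne h1, h2⟩
      rw [e1, e2]
      exact hr
    · by_cases hg0 : g e = 0
      · obtain ⟨I, S, hIG, hSG, h1, h2, hr⟩ := IH V W ‹_› ‹_› ‹_› ‹_› f g
        refine ⟨I, S, hIG.trans (Finset.subset_insert _ _),
          hSG.trans (Finset.subset_insert _ _), h1, h2, ?_⟩
        have heS : e ∉ S := fun hx => he (hSG hx)
        have e2 : (insert e G') \ S = insert e (G' \ S) := by
          ext x
          simp only [Finset.mem_sdiff, Finset.mem_insert]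
          constructor
          · rintro ⟨h1 | h1, h2⟩
            · exact Or.inl h1
            · exact Or.inr ⟨h1, h2⟩
          · rintro (rfl | ⟨h1, h2⟩)
            · exact ⟨Or.inl rfl, heS⟩
            · exact ⟨Or.inr h1, h2⟩
        have e3 : Set.finrank ℂ (g '' ↑(insert e (G' \ S))) = Set.finrank ℂ (g '' ↑(G' \ S)) := by
          rw [Finset.coe_insert, Set.image_insert_eq, hg0]
          show Module.finrank ℂ (span ℂ (insert 0 (g '' ↑(G' \ S)))) = _
          rw [span_insert_zero]
          rfl
        rw [e2, e3]
        exact hr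
      · -- both f e ≠ 0 and g e ≠ 0
        obtain ⟨I₁, S₁, hI₁G, hS₁G, h11, h12, hr1⟩ := IH V W ‹_› ‹_› ‹_› ‹_› f g
        obtain ⟨I₂, S₂, hI₂G, hS₂G, h21, h22, hr2⟩ :=
          IH (V ⧸ span ℂ {f e}) (W ⧸ span ℂ {g e}) inferInstance inferInstance
            inferInstance inferInstance
            (fun x => (span ℂ {f e}).mkQ (f x)) (fun x => (span ℂ {g e}).mkQ (g x))
        have heI₂ : e ∉ I₂ := fun hx => he (hI₂G hx)
        have heS₁ : e ∉ S₁ := fun hx => he (hS₁G hx)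
        have heS₂ : e ∉ S₂ := fun hx => he (hS₂G hx)
        -- the extended independent set
        have hJf : LinearIndependent ℂ (fun i : (insert e I₂ : Finset E) => f i) :=
          li_insert_of_quotient heI₂ hf0 h21
        have hJg : LinearIndependent ℂ (fun i : (insert e I₂ : Finset E) => g i) :=
          li_insert_of_quotient heI₂ hg0 h22
        -- rank identities
        have hq1 : Set.finrank ℂ (f '' ↑(insert e S₂)) =
            Set.finrank ℂ ((fun x => (span ℂ {f e}).mkQ (f x)) '' ↑S₂) + 1 := by
          rw [Finset.coe_insert, Set.image_insert_eq,
            finrank_insert_quotient hf0 (S₂.finite_toSet.image f)]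
          congr 1
          rw [show (fun x => (span ℂ {f e}).mkQ (f x)) = (span ℂ {f e}).mkQ ∘ f from rfl,
            Set.image_comp]
        have hGs : (insert e G') \ S₂ = insert e (G' \ S₂) := by
          ext x
          simp only [Finset.mem_sdiff, Finset.mem_insert]
          constructor
          · rintro ⟨h1 | h1, h2⟩
            · exact Or.inl h1
            · exact Or.inr ⟨h1, h2⟩
          · rintro (rfl | ⟨h1, h2⟩)
            · exact ⟨Or.inl rfl, heS₂⟩
            · exact ⟨Or.inr h1, h2⟩
        have hq2 : Set.finrank ℂ (g '' ↑((insert e G') \ S₂)) =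
            Set.finrank ℂ ((fun x => (span ℂ {g e}).mkQ (g x)) '' ↑(G' \ S₂)) + 1 := by
          rw [hGs, Finset.coe_insert, Set.image_insert_eq,
            finrank_insert_quotient hg0 ((G' \ S₂).finite_toSet.image g)]
          congr 1
          rw [show (fun x => (span ℂ {g e}).mkQ (g x)) = (span ℂ {g e}).mkQ ∘ g from rfl,
            Set.image_comp]
        -- complement identity for the S₁ side
        have hc1 : (insert e G') \ (insert e S₁) = G' \ S₁ := by
          ext x
          have hne : x ∈ G' → x ≠ e := fun hx hxe => he (hxe ▸ hx)
          simp only [Finset.mem_sdiff, Finset.mem_insert, not_or]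
          constructor
          · rintro ⟨h1 | h1, h2, h3⟩
            · exact absurd h1 h2
            · exact ⟨h1, h3⟩
          · rintro ⟨h1, h2⟩
            exact ⟨Or.inr h1, hne h1, h2⟩
        -- submodularity, f side
        have hsubf := rank_submodular f S₁ (insert e S₂)
        have hfu : S₁ ∪ insert e S₂ = insert e (S₁ ∪ S₂) := by
          ext x; simp only [Finset.mem_union, Finset.mem_insert]; tauto
        have hfi : S₁ ∩ insert e S₂ = S₁ ∩ S₂ := by
          ext x
          have hne : x ∈ S₁ → x ≠ e := fun hx hxe => heS₁ (hxe ▸ hx)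
          simp only [Finset.mem_inter, Finset.mem_insert]
          constructor
          · rintro ⟨h1, h2 | h2⟩
            · exact absurd h2 (hne h1)
            · exact ⟨h1, h2⟩
          · rintro ⟨h1, h2⟩; exact ⟨h1, Or.inr h2⟩
        rw [hfu, hfi] at hsubf
        -- submodularity, g side
        have hsubg := rank_submodular g ((insert e G') \ (insert e S₁)) ((insert e G') \ S₂)
        have hgu : ((insert e G') \ (insert e S₁)) ∪ ((insert e G') \ S₂) =
            (insert e G') \ (S₁ ∩ S₂) := by
          ext x
          simp only [Finset.mem_union, Finset.mem_sdiff, Finset.mem_insert, Finset.mem_inter,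
            not_or, not_and]
          constructor
          · rintro (⟨h1, h2, h3⟩ | ⟨h1, h2⟩)
            · exact ⟨h1, fun hx1 hx2 => h3 hx1⟩
            · exact ⟨h1, fun hx1 hx2 => h2 hx2⟩
          · rintro ⟨h1, h2⟩
            by_cases hx1 : x ∈ S₁
            · exact Or.inr ⟨h1, fun hx2 => (h2 hx1 hx2)⟩
            · by_cases hxe : x = e
              · subst hxe
                exact Or.inr ⟨h1, heS₂⟩
              · exact Or.inl ⟨h1, hxe, hx1⟩
        have hgi : ((insert e G') \ (insert e S₁)) ∩ ((insert e G') \ S₂) =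
            (insert e G') \ (insert e (S₁ ∪ S₂)) := by
          ext x
          simp only [Finset.mem_inter, Finset.mem_sdiff, Finset.mem_insert, Finset.mem_union,
            not_or]
          tauto
        rw [hgu, hgi, hc1] at hsubg
        -- arithmetic
        set P := S₁ ∩ S₂ with hP
        set Q := insert e (S₁ ∪ S₂) with hQ
        have key : (Set.finrank ℂ (f '' ↑P) + Set.finrank ℂ (g '' ↑((insert e G') \ P))) +
            (Set.finrank ℂ (f '' ↑Q) + Set.finrank ℂ (g '' ↑((insert e G') \ Q))) ≤
            I₁.card + (I₂.card + 2) := by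
          have := hr1
          have := hr2
          omega
        have hcard : (insert e I₂).card = I₂.card + 1 := Finset.card_insert_of_notMem heI₂
        by_cases hx : Set.finrank ℂ (f '' ↑P) + Set.finrank ℂ (g '' ↑((insert e G') \ P)) ≤ I₁.card
        · exact ⟨I₁, P, hI₁G.trans (Finset.subset_insert _ _),
            (Finset.inter_subset_left.trans hS₁G).trans (Finset.subset_insert _ _),
            h11, h12, hx⟩
        · refine ⟨insert e I₂, Q, Finset.insert_subset_insert _ hI₂G,
            Finset.insert_subset_insert _ (Finset.union_subset hS₁G hS₂G), hJf, hJg, ?_⟩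
          omega

/-- the maximum cardinality of a jointly independent subset
I ⊆ {1,…,d} equals the minimum over S ⊆ {1,…,d} of
dim span {wᵢ : i ∈ S} + dim span {rⱼ : j ∉ S}. -/
theorem max_jointly_independent_eq_min (d n₁ n₂ : ℕ)
    (w : Fin d → Fin n₁ → ℂ) (r : Fin d → Fin n₂ → ℂ) :
    (⨆ I : {I : Finset (Fin d) //
        LinearIndependent ℂ (fun i : I => w i) ∧
        LinearIndependent ℂ (fun i : I => r i)},
        (I : Finset (Fin d)).card) =
      ⨅ S : Finset (Fin d),
        (Set.finrank ℂ (w '' ↑S) + Set.finrank ℂ (r '' ↑(Sᶜ))) := by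
  classical
  have easy : ∀ (I : Finset (Fin d)),
      LinearIndependent ℂ (fun i : I => w i) →
      LinearIndependent ℂ (fun i : I => r i) →
      ∀ S : Finset (Fin d),
        I.card ≤ Set.finrank ℂ (w '' ↑S) + Set.finrank ℂ (r '' ↑(Sᶜ)) := by
    intro I h1 h2 S
    have hsplit := Finset.card_sdiff_add_card_inter I S
    have b1 : (I ∩ S).card ≤ Set.finrank ℂ (w '' ↑S) := by
      refine card_le_set_finrank (li_subset Finset.inter_subset_left h1)
        (S.finite_toSet.image w) ?_
      intro i hi
      exact Set.mem_image_of_mem w (Finset.mem_coe.mpr (Finset.mem_inter.mp hi).2)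
    have b2 : (I \ S).card ≤ Set.finrank ℂ (r '' ↑(Sᶜ)) := by
      refine card_le_set_finrank (li_subset (Finset.sdiff_subset) h2)
        ((Sᶜ).finite_toSet.image r) ?_
      intro i hi
      exact Set.mem_image_of_mem r
        (Finset.mem_coe.mpr (Finset.mem_compl.mpr (Finset.mem_sdiff.mp hi).2))
    omega
  have hne : Nonempty {I : Finset (Fin d) //
      LinearIndependent ℂ (fun i : I => w i) ∧
      LinearIndependent ℂ (fun i : I => r i)} :=
    ⟨⟨∅, linearIndependent_empty_type, linearIndependent_empty_type⟩⟩
  have bdd : BddAbove (Set.range fun I : {I : Finset (Fin d) //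
      LinearIndependent ℂ (fun i : I => w i) ∧
      LinearIndependent ℂ (fun i : I => r i)} => (I : Finset (Fin d)).card) := by
    refine ⟨d, ?_⟩
    rintro x ⟨I, rfl⟩
    simpa using Finset.card_le_univ (I : Finset (Fin d))
  apply le_antisymm
  · exact ciSup_le fun I => le_ciInf fun S => easy I.1 I.2.1 I.2.2 S
  · obtain ⟨I, S, hIu, hSu, h1, h2, hr⟩ :=
      exists_indep_ge (Fin d) Finset.univ (Fin n₁ → ℂ) (Fin n₂ → ℂ)
        inferInstance inferInstance inferInstance inferInstance w r
    have hcompl : Finset.univ \ S = Sᶜ := (Finset.compl_eq_univ_sdiff S).symm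
    calc (⨅ S' : Finset (Fin d),
          (Set.finrank ℂ (w '' ↑S') + Set.finrank ℂ (r '' ↑(S'ᶜ)))) ≤
        Set.finrank ℂ (w '' ↑S) + Set.finrank ℂ (r '' ↑(Sᶜ)) :=
          ciInf_le (OrderBot.bddBelow _) S
      _ ≤ I.card := by rw [← hcompl]; exact hr
      _ ≤ _ := le_ciSup bdd ⟨I, h1, h2⟩
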